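/- Let M_d = (1+d)M_b - d·J as above and let (v,w) be a nontrivial stationary point of the rank-one nonnegative factorization of M_d (i.e., v = max(0, M_d wᵀ/||w||₂²), wᵀ = max(0, vᵀM_d/||v||₂²), v,w ≥ 0 nonzero). If M_d(i,j) = -d and v_i w_j > 0 for some (i,j), then 0 < v_i < ||v||₁/(d+1) and 0 < w_j < ||w||₁/(d+1). -/

import Mathlib

/-- If (v,w) is a nontrivial stationary point of the rank-one NF of M_d,
M_d(i,j) = -d and v_i w_j > 0, then 0 < v_i < ‖v‖₁/(d+1) and 0 < w_j < ‖w‖₁/(d+1). -/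
theorem stmt_5 (m n : ℕ) (Mb : Fin m → Fin n → ℝ)
    (hbin : ∀ i j, Mb i j = 0 ∨ Mb i j = 1)
    (d : ℝ) (hd0 : 0 < d)
    (Md : Fin m → Fin n → ℝ) (hMd : ∀ i j, Md i j = (1 + d) * Mb i j - d)
    (v : Fin m → ℝ) (w : Fin n → ℝ)
    (hv : ∀ i, 0 ≤ v i) (hw : ∀ j, 0 ≤ w j) (hv0 : v ≠ 0) (hw0 : w ≠ 0)
    (hsv : ∀ i, v i = max 0 ((∑ j, Md i j * w j) / (∑ j, (w j) ^ 2)))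
    (hsw : ∀ j, w j = max 0 ((∑ i, v i * Md i j) / (∑ i, (v i) ^ 2)))
    (i : Fin m) (j : Fin n) (hMdij : Md i j = -d) (hpos : 0 < v i * w j) :
    (0 < v i ∧ v i < (∑ k, v k) / (d + 1)) ∧
    (0 < w j ∧ w j < (∑ k, w k) / (d + 1)) := by
  have hMdle : ∀ a b, Md a b ≤ 1 := by
    intro a b
    rcases hbin a b with h | h <;> rw [hMd, h] <;> nlinarith
  have hvi : 0 < v i := by
    rcases (hv i).eq_or_lt with h | h
    · exfalso; rw [← h] at hpos; simp at hpos
    · exact h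
  have hwj : 0 < w j := by
    rcases (hw j).eq_or_lt with h | h
    · exfalso; rw [← h] at hpos; simp at hpos
    · exact h
  -- denominators positive
  have hdenw : 0 < ∑ k, (w k) ^ 2 := by
    obtain ⟨k0, hk0⟩ := Function.ne_iff.mp hw0
    exact Finset.sum_pos' (fun k _ => sq_nonneg _)
      ⟨k0, Finset.mem_univ _, by simp only [Pi.zero_apply] at hk0; positivity⟩
  have hdenv : 0 < ∑ k, (v k) ^ 2 := by
    obtain ⟨k0, hk0⟩ := Function.ne_iff.mp hv0
    exact Finset.sum_pos' (fun k _ => sq_nonneg _)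
      ⟨k0, Finset.mem_univ _, by simp only [Pi.zero_apply] at hk0; positivity⟩
  -- numerators positive
  have hnumv : 0 < ∑ k, Md i k * w k := by
    have h := hsv i
    rw [h] at hvi
    rcases lt_max_iff.mp hvi with h0 | hdiv
    · exact absurd h0 (lt_irrefl 0)
    · have := mul_pos hdiv hdenw
      rwa [div_mul_cancel₀ _ (ne_of_gt hdenw)] at this
  have hnumw : 0 < ∑ k, v k * Md k j := by
    have h := hsw j
    rw [h] at hwj
    rcases lt_max_iff.mp hwj with h0 | hdiv
    · exact absurd h0 (lt_irrefl 0)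
    · have := mul_pos hdiv hdenv
      rwa [div_mul_cancel₀ _ (ne_of_gt hdenv)] at this
  have hwj : 0 < w j := by
    rcases (hw j).eq_or_lt with h | h
    · exfalso; rw [← h] at hpos; simp at hpos
    · exact h
  -- key bounds
  have hkeyw : ∑ k, Md i k * w k ≤ (∑ k, w k) - (1 + d) * w j := by
    have hle : ∀ k ∈ Finset.univ, Md i k * w k ≤
        w k - (if k = j then (1 + d) * w k else 0) := by
      intro k _
      by_cases hk : k = j
      · subst hk; rw [hMdij]; simp; ring_nf; nlinarith
      · simp [hk]; nlinarith [hMdle i k, hw k]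
    calc ∑ k, Md i k * w k
        ≤ ∑ k, (w k - (if k = j then (1 + d) * w k else 0)) :=
          Finset.sum_le_sum hle
      _ = (∑ k, w k) - (1 + d) * w j := by
          rw [Finset.sum_sub_distrib, Finset.sum_ite_eq' Finset.univ j
            (fun k => (1 + d) * w k)]
          simp
  have hkeyv : ∑ k, v k * Md k j ≤ (∑ k, v k) - (1 + d) * v i := by
    have hle : ∀ k ∈ Finset.univ, v k * Md k j ≤
        v k - (if k = i then (1 + d) * v k else 0) := by
      intro k _
      by_cases hk : k = i
      · subst hk; rw [hMdij]; simp; ring_nf; nlinarith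
      · simp [hk]; nlinarith [hMdle k j, hv k]
    calc ∑ k, v k * Md k j
        ≤ ∑ k, (v k - (if k = i then (1 + d) * v k else 0)) :=
          Finset.sum_le_sum hle
      _ = (∑ k, v k) - (1 + d) * v i := by
          rw [Finset.sum_sub_distrib, Finset.sum_ite_eq' Finset.univ i
            (fun k => (1 + d) * v k)]
          simp
  have hd1 : (0:ℝ) < d + 1 := by linarith
  have hvi' : 0 < v i := by
    rcases (hv i).eq_or_lt with h | h
    · exfalso; rw [← h] at hpos; simp at hpos
    · exact h
  refine ⟨⟨hvi', ?_⟩, ⟨hwj, ?_⟩⟩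
  · rw [lt_div_iff₀ hd1]; nlinarith
  · rw [lt_div_iff₀ hd1]; nlinarith
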